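/- Let N ≥ 2 and K ≥ 1, and let (w, P) be a configuration with confidence e. If e = 1/N, then for every k with w k > 0 and every i ∈ Fin N one has P k i = 1/N, and consequently for every function f : ℝ → ℝ the f-impurity satisfies I = N·f(1/N). (Equality case e = 1/N of Theorem 2: the upper bound u(e) is attained.) -/

import Mathlib

open Finset

/-- The maximum of a real-valued vector over the finite index set `Fin N` (`N > 0`). -/
noncomputable def colMax {N : ℕ} (hN : 0 < N) (v : Fin N → ℝ) : ℝ :=
  Finset.univ.sup' (Finset.univ_nonempty_iff.mpr ⟨⟨0, hN⟩⟩) v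

/-- Equality case `e = 1/N` of Theorem 2: if the confidence equals `1/N`, then every
cell with positive weight is uniform, and the `f`-impurity equals `N * f(1/N)` for
every `f`. -/
theorem confidence_eq_inv_N (N K : ℕ) (hN : 2 ≤ N) (hK : 1 ≤ K)
    (w : Fin K → ℝ) (hw : ∀ k, 0 ≤ w k) (hws : ∑ k, w k = 1)
    (P : Fin K → Fin N → ℝ) (hP : ∀ k i, 0 ≤ P k i) (hPs : ∀ k, ∑ i, P k i = 1)
    (e : ℝ) (he : e = ∑ k, w k * colMax (by omega) (P k))
    (heq : e = 1 / (N : ℝ)) :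
    (∀ k, 0 < w k → ∀ i, P k i = 1 / (N : ℝ)) ∧
      (∀ f : ℝ → ℝ, ∑ k, ∑ i, w k * f (P k i) = (N : ℝ) * f (1 / (N : ℝ))) := by
  have hN0 : (0 : ℕ) < N := by omega
  have hNR : (0 : ℝ) < (N : ℝ) := by exact_mod_cast hN0
  -- max ≥ 1/N for each k
  have hle : ∀ k i, P k i ≤ colMax hN0 (P k) := fun k i =>
    Finset.le_sup' (P k) (Finset.mem_univ i)
  have hmax : ∀ k, 1 / (N : ℝ) ≤ colMax hN0 (P k) := by
    intro k
    have h1 : (1 : ℝ) ≤ (N : ℝ) * colMax hN0 (P k) := by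
      calc (1 : ℝ) = ∑ i, P k i := (hPs k).symm
        _ ≤ ∑ _i : Fin N, colMax hN0 (P k) := Finset.sum_le_sum fun i _ => hle k i
        _ = (N : ℝ) * colMax hN0 (P k) := by
            rw [Finset.sum_const, Finset.card_univ, Fintype.card_fin, nsmul_eq_mul]
    rw [div_le_iff₀ hNR, mul_comm]; linarith
  -- the sum of nonneg terms w k * (max - 1/N) is zero
  have hzero : ∀ k ∈ Finset.univ, w k * (colMax hN0 (P k) - 1 / (N : ℝ)) = 0 := by
    have hsum : ∑ k, w k * (colMax hN0 (P k) - 1 / (N : ℝ)) = 0 := by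
      have : ∑ k, w k * (colMax hN0 (P k) - 1 / (N : ℝ))
          = (∑ k, w k * colMax hN0 (P k)) - (∑ k, w k) * (1 / (N : ℝ)) := by
        rw [Finset.sum_mul, ← Finset.sum_sub_distrib]
        congr 1; ext k; ring
      rw [this, hws, ← he, heq]; ring
    intro k _
    have := (Finset.sum_eq_zero_iff_of_nonneg (fun k _ =>
      mul_nonneg (hw k) (by linarith [hmax k]))).mp hsum
    exact this k (Finset.mem_univ k)
  have key : ∀ k, 0 < w k → ∀ i, P k i = 1 / (N : ℝ) := by
    intro k hk i
    have hM : colMax hN0 (P k) = 1 / (N : ℝ) := by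
      have := hzero k (Finset.mem_univ k)
      rcases mul_eq_zero.mp this with h | h
      · linarith
      · linarith
    -- each P k i ≤ 1/N and their sum is 1 = N * (1/N)
    have hle' : ∀ i, P k i ≤ 1 / (N : ℝ) := fun i => hM ▸ hle k i
    have hsum0 : ∑ i, (1 / (N : ℝ) - P k i) = 0 := by
      rw [Finset.sum_sub_distrib, hPs k, Finset.sum_const, Finset.card_univ,
        Fintype.card_fin, nsmul_eq_mul]
      field_simp
      ring
    have := (Finset.sum_eq_zero_iff_of_nonneg (fun i _ => by linarith [hle' i])).mp hsum0
      i (Finset.mem_univ i)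
    linarith
  refine ⟨key, fun f => ?_⟩
  have : ∀ k, ∑ i, w k * f (P k i) = w k * ((N : ℝ) * f (1 / (N : ℝ))) := by
    intro k
    rcases lt_or_eq_of_le (hw k) with hk | hk
    · have : ∀ i, P k i = 1 / (N : ℝ) := key k hk
      simp only [this, Finset.sum_const, Finset.card_univ, Fintype.card_fin, nsmul_eq_mul]
      ring
    · simp [← hk]
  rw [Finset.sum_congr rfl fun k _ => this k, ← Finset.sum_mul, hws, one_mul]
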